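/- Let R be a commutative ring, f ∈ R[X], and let i, m be natural numbers with i < m. Then f divides the i-th Hasse derivative of f^m, i.e., f ∣ Polynomial.hasseDeriv i (f^m). -/

import Mathlib

open Polynomial

/-- For `i < m`, `f` divides the `i`-th Hasse derivative of `f ^ m`. -/
theorem hasseDeriv_pow_dvd {R : Type*} [CommRing R] (f : R[X]) (i m : ℕ) (h : i < m) :
    f ∣ Polynomial.hasseDeriv i (f ^ m) := by
  induction m using Nat.strong_induction_on generalizing i with
  | _ m ih =>
    match m, h with
    | m + 1, h =>
      rw [pow_succ', hasseDeriv_mul]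
      apply Finset.dvd_sum
      rintro ⟨j, k⟩ hjk
      rw [Finset.HasAntidiagonal.mem_antidiagonal] at hjk
      rcases Nat.eq_zero_or_pos j with hj | hj
      · subst hj
        simp only [Nat.zero_add] at hjk
        subst hjk
        simp only [hasseDeriv_zero, LinearMap.id_coe, id_eq]
        exact dvd_mul_right f _
      · have hk : k < m := by omega
        exact (ih m (Nat.lt_succ_self m) k hk).mul_left _
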